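/- Define a sequence by y₀ = 0, y₁ = 1, and, for a fixed η ∈ (0,1) (playing the role of εδ), y_{k+1} = ½(y_k + z_k) where z_k = min_{1≤i≤k} [ y_i + (η/(1−η))(y_i − y_{i−1}) ]. Then the sequence is strictly increasing: y₁ < y₂ < ⋯ < y_m for every m, and for each k ∈ {2,…,m}, (y_m/y_k)(1−η) + (y_{k−1}/y_k)η < 1. -/

import Mathlib

theorem stmt14 (η : ℝ) (hη0 : 0 < η) (hη1 : η < 1) (y z : ℕ → ℝ)
    (hy0 : y 0 = 0) (hy1 : y 1 = 1)
    (hz : ∀ k (hk : 1 ≤ k), z k =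
      Finset.inf' (Finset.Icc 1 k) (Finset.nonempty_Icc.mpr hk)
        (fun i => y i + η / (1 - η) * (y i - y (i - 1))))
    (hrec : ∀ k, 1 ≤ k → y (k + 1) = (y k + z k) / 2) :
    (∀ k, 1 ≤ k → y k < y (k + 1)) ∧
    (∀ m k, 2 ≤ k → k ≤ m → (y m / y k) * (1 - η) + (y (k - 1) / y k) * η < 1) := by
  have h1η : (0:ℝ) < 1 - η := by linarith
  have hc : 0 < η / (1 - η) := div_pos hη0 h1η
  have key : ∀ k, 1 ≤ k → y k < z k := by
    intro k hk
    induction k, hk using Nat.le_induction with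
    | base =>
      rw [hz 1 le_rfl]
      simp only [Finset.Icc_self, Finset.inf'_singleton]
      rw [hy0, hy1]
      nlinarith
    | succ k hk ih =>
      have hy' : y (k+1) = (y k + z k)/2 := hrec k hk
      have h1 : y k < y (k+1) := by rw [hy']; linarith
      have h2 : y (k+1) < z k := by rw [hy']; linarith
      rw [hz (k+1) (by omega), Finset.lt_inf'_iff]
      intro i hi
      simp only [Finset.mem_Icc] at hi
      rcases Nat.lt_or_ge i (k+1) with h | h
      · have hik : i ∈ Finset.Icc 1 k := by simp only [Finset.mem_Icc]; omega
        have hle : z k ≤ y i + η/(1-η)*(y i - y (i-1)) := by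
          rw [hz k hk]
          exact Finset.inf'_le _ hik
        linarith
      · have hik : i = k+1 := by omega
        subst hik
        simp only [Nat.add_sub_cancel]
        nlinarith [mul_pos hc (sub_pos.mpr h1)]
  have hmono : ∀ k, 1 ≤ k → y k < y (k + 1) := by
    intro k hk
    have := key k hk
    rw [hrec k hk]; linarith
  refine ⟨hmono, ?_⟩
  have hle : ∀ a b, 1 ≤ a → a ≤ b → y a ≤ y b := by
    intro a b ha hab
    induction b, hab using Nat.le_induction with
    | base => exact le_refl _
    | succ b hb ih => exact le_trans ih (le_of_lt (hmono b (le_trans ha hb)))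
  have hpos : ∀ k, 1 ≤ k → 0 < y k := by
    intro k hk
    have := hle 1 k le_rfl hk
    rw [hy1] at this; linarith
  intro m k hk2 hkm
  have hm1 : 1 ≤ m := by omega
  have hzm : z m ≤ y k + η/(1-η)*(y k - y (k-1)) := by
    rw [hz m hm1]
    exact Finset.inf'_le _ (by simp only [Finset.mem_Icc]; omega)
  have hym : y m < y k + η/(1-η)*(y k - y (k-1)) := lt_of_lt_of_le (key m hm1) hzm
  have hyk : 0 < y k := hpos k (by omega)
  rw [div_mul_eq_mul_div, div_mul_eq_mul_div, ← add_div, div_lt_one hyk]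
  have key2 : y m * (1-η) < y k * (1-η) + η * (y k - y (k-1)) := by
    have h := mul_lt_mul_of_pos_right hym h1η
    calc y m * (1-η) < (y k + η/(1-η)*(y k - y (k-1))) * (1-η) := h
      _ = y k*(1-η) + η*(y k - y (k-1)) := by field_simp
  nlinarith
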